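/- arXiv:math/0609692 — 4 statements merged into one kernel-verified Lean document; each statement's English description precedes it below -/
import Mathlib

section
/- Let n ≥ 1, 1 ≤ p, q ≤ ∞ with 1/p + 1/q ≥ 1, and let α, β ∈ ℝ satisfy α + β = -n/p' - n/q' and α < -n/p'. Then for all f ∈ L^p(ℝ^n) and g ∈ L^q(ℝ^n), the integral ∬_{|y| ≤ C|x|} |x|^α |y|^β |f(x)| |g(y)| dx dy is bounded by a constant (depending on α, β, p, q, n, C) times ‖f‖_{L^p} ‖g‖_{L^q}. -/
open MeasureTheory ENNReal Set
open scoped FourierTransform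

noncomputable section



/-- ℓ^Q ⊆ ℓ^{P'} embedding for ENNReal-valued sequences. -/
lemma tsum_rpow_antitone (a : ℤ → ℝ≥0∞) {Q P' : ℝ} (hQ : 0 < Q) (hQP : Q ≤ P') :
    (∑' k, a k ^ P') ^ (1/P') ≤ (∑' k, a k ^ Q) ^ (1/Q) := by
  have hP' : 0 < P' := lt_of_lt_of_le hQ hQP
  set S : ℝ≥0∞ := (∑' k, a k ^ Q) ^ (1/Q) with hS
  rcases eq_or_ne S ⊤ with h | hStop
  · simp [h]
  rcases eq_or_ne S 0 with h0 | hS0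
  · have hsum0 : (∑' k, a k ^ Q) = 0 := by
      have := h0
      rw [hS, ENNReal.rpow_eq_zero_iff] at this
      rcases this with ⟨h1, _⟩ | ⟨_, h2⟩
      · exact h1
      · exact absurd h2 (not_lt.2 (one_div_pos.mpr hQ).le)
    have ha : ∀ k, a k = 0 := by
      intro k
      have hk : a k ^ Q = 0 := ENNReal.tsum_eq_zero.mp hsum0 k
      rw [ENNReal.rpow_eq_zero_iff] at hk
      rcases hk with ⟨h1, _⟩ | ⟨_, h2⟩
      · exact h1
      · exact absurd h2 hQ.not_gt
    have hz : (∑' k, a k ^ P') = 0 := by simp [ha, ENNReal.zero_rpow_of_pos hP']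
    rw [hz, ENNReal.zero_rpow_of_pos (one_div_pos.mpr hP')]
    exact zero_le
  · have hsumQ_ne_top : (∑' k, a k ^ Q) ≠ ⊤ := by
      intro h
      exact hStop (by rw [hS, h, ENNReal.top_rpow_of_pos (one_div_pos.mpr hQ)])
    have hSQ : S ^ Q = ∑' k, a k ^ Q := by
      rw [hS, ← ENNReal.rpow_mul, one_div, inv_mul_cancel₀ hQ.ne', ENNReal.rpow_one]
    have hak_le : ∀ k, a k ≤ S := by
      intro k
      have h1 : a k ^ Q ≤ S ^ Q := by rw [hSQ]; exact ENNReal.le_tsum k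
      have := ENNReal.rpow_le_rpow h1 (le_of_lt (one_div_pos.mpr hQ))
      rwa [← ENNReal.rpow_mul, ← ENNReal.rpow_mul, mul_one_div, div_self hQ.ne',
        ENNReal.rpow_one, ENNReal.rpow_one] at this
    have key : ∀ k, a k ^ P' ≤ a k ^ Q * S ^ (P' - Q) := by
      intro k
      rcases eq_or_ne (a k) 0 with h0' | hne0
      · simp [h0', ENNReal.zero_rpow_of_pos hP']
      · have hne_top : a k ≠ ⊤ := fun h => hStop (by rw [← top_le_iff, ← h]; exact hak_le k)
        have heq : a k ^ P' = a k ^ Q * a k ^ (P' - Q) := by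
          rw [← ENNReal.rpow_add _ _ hne0 hne_top]; ring_nf
        rw [heq]
        exact mul_le_mul_right (ENNReal.rpow_le_rpow (hak_le k) (sub_nonneg.2 hQP)) _
    calc (∑' k, a k ^ P') ^ (1/P')
        ≤ (∑' k, a k ^ Q * S ^ (P' - Q)) ^ (1/P') :=
          ENNReal.rpow_le_rpow (ENNReal.tsum_le_tsum key) (one_div_pos.mpr hP').le
      _ = ((∑' k, a k ^ Q) * S ^ (P' - Q)) ^ (1/P') := by rw [ENNReal.tsum_mul_right]
      _ = (S ^ Q * S ^ (P' - Q)) ^ (1/P') := by rw [hSQ]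
      _ = (S ^ P') ^ (1/P') := by
          rw [← ENNReal.rpow_add _ _ hS0 hStop]
          norm_num
      _ = S := by rw [← ENNReal.rpow_mul, mul_one_div, div_self hP'.ne', ENNReal.rpow_one]

lemma holder_shift (p q : ℝ≥0∞) (hp : 1 ≤ p) (hq : 1 ≤ q) (hpq : 1 ≤ 1/p + 1/q)
    (F G : ℤ → ℝ≥0∞) (Sf Sg : ℝ≥0∞)
    (hF1 : ∀ j, F j ≤ Sf) (hG1 : ∀ k, G k ≤ Sg)
    (hFp : p ≠ ⊤ → ∑' j, F j ^ p.toReal ≤ Sf ^ p.toReal)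
    (hGq : q ≠ ⊤ → ∑' k, G k ^ q.toReal ≤ Sg ^ q.toReal)
    (m : ℤ) : ∑' j, F j * G (j - m) ≤ Sf * Sg := by
  have hsumF1 : p = 1 → ∑' j, F j ≤ Sf := by
    intro h; have := hFp (by rw [h]; exact one_ne_top)
    simpa [h] using this
  have hsumG1 : q = 1 → ∑' k, G k ≤ Sg := by
    intro h; have := hGq (by rw [h]; exact one_ne_top)
    simpa [h] using this
  have hshift : ∀ (s : ℝ), ∑' j, G (j - m) ^ s = ∑' k, G k ^ s := fun s =>
    (Equiv.subRight m).tsum_eq (fun k => G k ^ s)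
  by_cases hq1 : q = 1
  · calc ∑' j, F j * G (j - m) ≤ ∑' j, Sf * G (j - m) :=
          ENNReal.tsum_le_tsum (fun j => mul_le_mul_left (hF1 j) _)
      _ = Sf * ∑' j, G (j - m) := ENNReal.tsum_mul_left
      _ = Sf * ∑' k, G k := by
          congr 1
          exact (Equiv.subRight m).tsum_eq G
      _ ≤ Sf * Sg := mul_le_mul_right (hsumG1 hq1) _
  by_cases hp1 : p = 1
  · calc ∑' j, F j * G (j - m) ≤ ∑' j, F j * Sg :=
          ENNReal.tsum_le_tsum (fun j => mul_le_mul_right (hG1 _) _)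
      _ = (∑' j, F j) * Sg := ENNReal.tsum_mul_right
      _ ≤ Sf * Sg := mul_le_mul_left (hsumF1 hp1) _
  -- now 1 < p, 1 < q
  have hplt : 1 < p := lt_of_le_of_ne hp (Ne.symm hp1)
  have hqlt : 1 < q := lt_of_le_of_ne hq (Ne.symm hq1)
  have hptop : p ≠ ⊤ := by
    intro h
    rw [h] at hpq
    simp only [ENNReal.div_top, zero_add] at hpq
    have : q ≤ 1 := ENNReal.inv_le_inv.mp (by simpa [one_div] using hpq)
    exact hq1 (le_antisymm this hq)
  have hqtop : q ≠ ⊤ := by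
    intro h
    rw [h] at hpq
    simp only [ENNReal.div_top, add_zero] at hpq
    have : p ≤ 1 := ENNReal.inv_le_inv.mp (by simpa [one_div] using hpq)
    exact hp1 (le_antisymm this hp)
  set P := p.toReal with hP
  set Q := q.toReal with hQdef
  have hP1 : 1 < P := by
    rw [hP, ← ENNReal.toReal_one]
    exact ENNReal.toReal_strict_mono hptop hplt
  have hQ1 : 1 < Q := by
    rw [hQdef, ← ENNReal.toReal_one]
    exact ENNReal.toReal_strict_mono hqtop hqlt
  have hconj : P.HolderConjugate (Real.conjExponent P) := .conjExponent hP1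
  set P' := Real.conjExponent P with hP'def
  have hP'pos : 0 < P' := hconj.symm.pos
  -- 1 ≤ 1/P + 1/Q in ℝ
  have hfin : 1/p + 1/q ≠ ⊤ := by
    apply ENNReal.add_ne_top.2
    constructor <;> · rw [one_div]
                      exact ENNReal.inv_ne_top.2 (by positivity)
  have hreal : 1 ≤ 1/P + 1/Q := by
    have := ENNReal.toReal_mono hfin hpq
    rwa [ENNReal.toReal_one, ENNReal.toReal_add (by simp [one_div, ENNReal.inv_ne_top]; positivity) (by simp [one_div, ENNReal.inv_ne_top]; positivity), one_div, one_div, ENNReal.toReal_inv, ENNReal.toReal_inv, ← one_div, ← one_div] at this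
  have hQpos : 0 < Q := lt_trans one_pos hQ1
  rw [one_div, one_div] at hreal
  have hQP' : Q ≤ P' := by
    have h2 : P⁻¹ + P'⁻¹ = 1 := by simpa using hconj.inv_add_inv_eq_inv
    have h1 : P'⁻¹ ≤ Q⁻¹ := by linarith
    have h3 := inv_anti₀ (inv_pos.2 hP'pos) h1
    simpa using h3
  have hrw : ∀ (x : ℝ≥0∞) (s : ℝ), s ≠ 0 → (x ^ s) ^ (1/s) = x := by
    intro x s hs
    rw [← ENNReal.rpow_mul, mul_one_div, div_self hs, ENNReal.rpow_one]
  have hmeas : ∀ h : ℤ → ℝ≥0∞, AEMeasurable h (Measure.count : Measure ℤ) := fun h =>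
    (measurable_of_countable h).aemeasurable
  calc ∑' j, F j * G (j - m)
      = ∫⁻ j, ((fun j => F j) * (fun j => G (j - m))) j ∂(Measure.count : Measure ℤ) := by
        rw [MeasureTheory.lintegral_count]; rfl
    _ ≤ (∫⁻ j, F j ^ P ∂(Measure.count : Measure ℤ)) ^ (1/P) *
        (∫⁻ j, G (j - m) ^ P' ∂(Measure.count : Measure ℤ)) ^ (1/P') :=
        ENNReal.lintegral_mul_le_Lp_mul_Lq _ hconj (hmeas _) (hmeas _)
    _ = (∑' j, F j ^ P) ^ (1/P) * (∑' k, G k ^ P') ^ (1/P') := by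
        rw [MeasureTheory.lintegral_count, MeasureTheory.lintegral_count, hshift]
    _ ≤ (Sf ^ P) ^ (1/P) * (∑' k, G k ^ Q) ^ (1/Q) := by
        apply mul_le_mul'
        · exact ENNReal.rpow_le_rpow (hFp hptop) (by positivity)
        · exact tsum_rpow_antitone G hQpos hQP'
    _ ≤ Sf * (Sg ^ Q) ^ (1/Q) := by
        rw [hrw Sf P (by positivity)]
        exact mul_le_mul_right (ENNReal.rpow_le_rpow (hGq hqtop) (by positivity)) _
    _ = Sf * Sg := by rw [hrw Sg Q hQpos.ne']



def Ann (n : ℕ) (j : ℤ) : Set (EuclideanSpace ℝ (Fin n)) :=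
  {x | (2:ℝ)^j ≤ ‖x‖ ∧ ‖x‖ < (2:ℝ)^(j+1)}

lemma measurableSet_Ann (n : ℕ) (j : ℤ) : MeasurableSet (Ann n j) := by
  have : Ann n j = (fun x : EuclideanSpace ℝ (Fin n) => ‖x‖) ⁻¹' (Set.Ico ((2:ℝ)^j) ((2:ℝ)^(j+1))) := rfl
  rw [this]
  exact measurable_norm measurableSet_Ico

lemma pairwise_disjoint_Ann (n : ℕ) : Pairwise (Function.onFun Disjoint (Ann n)) := by
  intro i j hij
  wlog h : i < j generalizing i j
  · exact (this hij.symm (hij.lt_or_gt.resolve_left h)).symm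
  rw [Function.onFun, Set.disjoint_left]
  rintro x ⟨_, hxlt⟩ ⟨hxge, _⟩
  have h1 : (2:ℝ)^(i+1) ≤ (2:ℝ)^j := zpow_le_zpow_right₀ one_le_two (by omega)
  linarith

lemma mem_Ann_log (n : ℕ) (x : EuclideanSpace ℝ (Fin n)) (hx : x ≠ 0) :
    x ∈ Ann n (Int.log 2 ‖x‖) := by
  have hpos : 0 < ‖x‖ := norm_pos_iff.mpr hx
  constructor
  · have := Int.zpow_log_le_self (b := 2) (by norm_num) hpos
    simpa using this
  · have := Int.lt_zpow_succ_log_self (b := 2) (by norm_num) ‖x‖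
    simpa using this

lemma one_sub_inv_toReal (p : ℝ≥0∞) (hp : 1 ≤ p) :
    ((1 : ℝ≥0∞) - 1/p).toReal = 1 - 1/p.toReal := by
  rcases eq_or_ne p ⊤ with h | h
  · simp [h]
  · have h1 : 1/p ≤ 1 := by
      rw [one_div]
      simpa using ENNReal.inv_le_one.mpr hp
    rw [ENNReal.toReal_sub_of_le h1 one_ne_top, one_div, one_div, ENNReal.toReal_inv]
    simp

lemma ep_nonneg (p : ℝ≥0∞) (hp : 1 ≤ p) : 0 ≤ 1 - 1/p.toReal := by
  rcases eq_or_ne p ⊤ with h | h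
  · simp [h]
  · have : 1 ≤ p.toReal := by
      rw [← ENNReal.toReal_one]
      exact ENNReal.toReal_mono h hp
    have h2 : 1/p.toReal ≤ 1 := by
      rw [div_le_one (by linarith)]; linarith
    linarith

lemma sum_eLpNorm_rpow (n : ℕ) (p : ℝ≥0∞) (hp : 1 ≤ p) (hptop : p ≠ ⊤)
    (f : EuclideanSpace ℝ (Fin n) → ℂ) :
    ∑' j : ℤ, (eLpNorm f p (volume.restrict (Ann n j))) ^ p.toReal
      ≤ (eLpNorm f p volume) ^ p.toReal := by
  have hp0 : p ≠ 0 := by positivity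
  have hP : 0 < p.toReal := ENNReal.toReal_pos hp0 hptop
  have hrw : ∀ μ : Measure (EuclideanSpace ℝ (Fin n)),
      (eLpNorm f p μ) ^ p.toReal = ∫⁻ x, (‖f x‖₊ : ℝ≥0∞) ^ p.toReal ∂μ := by
    intro μ
    rw [eLpNorm_eq_lintegral_rpow_enorm_toReal hp0 hptop, ← ENNReal.rpow_mul, one_div,
      inv_mul_cancel₀ hP.ne', ENNReal.rpow_one]
    rfl
  simp only [hrw]
  rw [← lintegral_iUnion (fun j => measurableSet_Ann n j) (pairwise_disjoint_Ann n)]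
  exact setLIntegral_le_lintegral _ _

lemma ann_bound (n : ℕ) (hn : 1 ≤ n) (p : ℝ≥0∞) (hp : 1 ≤ p) (γ : ℝ)
    (f : EuclideanSpace ℝ (Fin n) → ℂ) (hf : AEStronglyMeasurable f volume) (j : ℤ) :
    ∫⁻ x in Ann n j, ENNReal.ofReal (‖x‖ ^ γ * ‖f x‖) ∂volume
      ≤ ENNReal.ofReal ((2:ℝ) ^ |γ| * (2:ℝ) ^ ((n:ℝ) * (1 - 1/p.toReal))
            * ((2:ℝ)^j) ^ (γ + (n:ℝ) * (1 - 1/p.toReal)))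
        * (volume (Metric.ball (0 : EuclideanSpace ℝ (Fin n)) 1)) ^ (1 - 1/p.toReal)
        * eLpNorm f p (volume.restrict (Ann n j)) := by
  haveI : Nontrivial (EuclideanSpace ℝ (Fin n)) := by
    refine ⟨EuclideanSpace.single ⟨0, hn⟩ 1, 0, ?_⟩
    intro h
    have := congrArg (fun v : EuclideanSpace ℝ (Fin n) => v ⟨0, hn⟩) h
    simp [EuclideanSpace.single] at this
  set ep : ℝ := 1 - 1/p.toReal with hepdef
  have hep : 0 ≤ ep := ep_nonneg p hp
  set Dj : ℝ := (2:ℝ)^j with hDjdef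
  have hDj : 0 < Dj := zpow_pos two_pos j
  set V : ℝ≥0∞ := volume (Metric.ball (0 : EuclideanSpace ℝ (Fin n)) 1) with hV
  -- pointwise bound for the power weight
  have hpow : ∀ x : EuclideanSpace ℝ (Fin n), x ∈ Ann n j →
      ‖x‖ ^ γ ≤ (2:ℝ) ^ |γ| * Dj ^ γ := by
    rintro x ⟨hxl, hxu⟩
    have h2D : (2:ℝ)^(j+1) = 2 * Dj := by
      rw [hDjdef, zpow_add_one₀ (two_ne_zero)]; ring
    rcases le_or_gt 0 γ with hγ | hγ
    · have h1 : ‖x‖ ^ γ ≤ (2 * Dj) ^ γ :=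
        Real.rpow_le_rpow (norm_nonneg x) (by rw [← h2D]; exact hxu.le) hγ
      have h2 : (2 * Dj) ^ γ = (2:ℝ)^γ * Dj ^ γ :=
        Real.mul_rpow (by norm_num) hDj.le
      have h3 : (2:ℝ)^γ ≤ (2:ℝ)^|γ| :=
        Real.rpow_le_rpow_of_exponent_le one_le_two (le_abs_self γ)
      calc ‖x‖ ^ γ ≤ (2:ℝ)^γ * Dj ^ γ := by rw [← h2]; exact h1
        _ ≤ (2:ℝ)^|γ| * Dj ^ γ :=
            mul_le_mul_of_nonneg_right h3 (Real.rpow_nonneg hDj.le γ)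
    · have h1 : ‖x‖ ^ γ ≤ Dj ^ γ := Real.rpow_le_rpow_of_nonpos hDj hxl hγ.le
      have h3 : (1:ℝ) ≤ (2:ℝ)^|γ| := Real.one_le_rpow one_le_two (abs_nonneg γ)
      calc ‖x‖ ^ γ ≤ Dj ^ γ := h1
        _ ≤ (2:ℝ)^|γ| * Dj ^ γ := le_mul_of_one_le_left (Real.rpow_nonneg hDj.le γ) h3
  -- step b : pull out the constant
  have hb : ∫⁻ x in Ann n j, ENNReal.ofReal (‖x‖ ^ γ * ‖f x‖) ∂volume
      ≤ ENNReal.ofReal ((2:ℝ) ^ |γ| * Dj ^ γ) * ∫⁻ x in Ann n j, (‖f x‖₊ : ℝ≥0∞) ∂volume := by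
    rw [← lintegral_const_mul' _ _ ENNReal.ofReal_ne_top]
    apply setLIntegral_mono' (measurableSet_Ann n j)
    intro x hx
    rw [ENNReal.ofReal_mul (Real.rpow_nonneg (norm_nonneg x) γ), ofReal_norm_eq_enorm]
    exact mul_le_mul_left (ENNReal.ofReal_le_ofReal (hpow x hx)) _
  -- step c : Hölder on the annulus
  have hc : ∫⁻ x in Ann n j, (‖f x‖₊ : ℝ≥0∞) ∂volume
      ≤ eLpNorm f p (volume.restrict (Ann n j)) * (volume (Ann n j)) ^ ep := by
    have h1 : eLpNorm f 1 (volume.restrict (Ann n j))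
        ≤ eLpNorm f p (volume.restrict (Ann n j))
          * (volume.restrict (Ann n j)) Set.univ ^ (1/(1:ℝ≥0∞).toReal - 1/p.toReal) :=
      eLpNorm_le_eLpNorm_mul_rpow_measure_univ hp hf.restrict
    rw [eLpNorm_one_eq_lintegral_enorm] at h1
    simp only [enorm_eq_nnnorm] at h1
    simpa [Measure.restrict_apply_univ, hepdef] using h1
  -- step d : volume of the annulus
  have hd : (volume (Ann n j)) ^ ep
      ≤ ENNReal.ofReal ((2:ℝ) ^ ((n:ℝ)*ep) * Dj ^ ((n:ℝ)*ep)) * V ^ ep := by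
    have hsub : Ann n j ⊆ Metric.ball (0 : EuclideanSpace ℝ (Fin n)) (2 * Dj) := by
      rintro x ⟨_, hxu⟩
      rw [mem_ball_zero_iff]
      calc ‖x‖ < (2:ℝ)^(j+1) := hxu
        _ = 2 * Dj := by rw [hDjdef, zpow_add_one₀ (two_ne_zero)]; ring
    have hball : volume (Metric.ball (0 : EuclideanSpace ℝ (Fin n)) (2 * Dj))
        = ENNReal.ofReal ((2 * Dj) ^ n) * V := by
      rw [Measure.addHaar_ball volume 0 (by positivity)]
      congr 2
      rw [finrank_euclideanSpace_fin]
    calc (volume (Ann n j)) ^ ep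
        ≤ (ENNReal.ofReal ((2 * Dj) ^ n) * V) ^ ep := by
          rw [← hball]
          exact ENNReal.rpow_le_rpow (measure_mono hsub) hep
      _ = (ENNReal.ofReal ((2 * Dj) ^ n)) ^ ep * V ^ ep :=
          ENNReal.mul_rpow_of_nonneg _ _ hep
      _ = ENNReal.ofReal (((2 * Dj) ^ n) ^ ep) * V ^ ep := by
          rw [ENNReal.ofReal_rpow_of_nonneg (by positivity) hep]
      _ = ENNReal.ofReal ((2:ℝ) ^ ((n:ℝ)*ep) * Dj ^ ((n:ℝ)*ep)) * V ^ ep := by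
          congr 2
          rw [← Real.rpow_natCast (2 * Dj) n, ← Real.rpow_mul (by positivity),
            Real.mul_rpow (by norm_num) hDj.le]
  -- combine
  calc ∫⁻ x in Ann n j, ENNReal.ofReal (‖x‖ ^ γ * ‖f x‖) ∂volume
      ≤ ENNReal.ofReal ((2:ℝ) ^ |γ| * Dj ^ γ)
          * (eLpNorm f p (volume.restrict (Ann n j)) * (volume (Ann n j)) ^ ep) :=
        hb.trans (mul_le_mul_right hc _)
    _ ≤ ENNReal.ofReal ((2:ℝ) ^ |γ| * Dj ^ γ)
          * (eLpNorm f p (volume.restrict (Ann n j))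
             * (ENNReal.ofReal ((2:ℝ) ^ ((n:ℝ)*ep) * Dj ^ ((n:ℝ)*ep)) * V ^ ep)) :=
        mul_le_mul_right (mul_le_mul_right hd _) _
    _ = (ENNReal.ofReal ((2:ℝ) ^ |γ| * Dj ^ γ)
          * ENNReal.ofReal ((2:ℝ) ^ ((n:ℝ)*ep) * Dj ^ ((n:ℝ)*ep)))
          * V ^ ep * eLpNorm f p (volume.restrict (Ann n j)) := by ring
    _ = ENNReal.ofReal ((2:ℝ) ^ |γ| * (2:ℝ) ^ ((n:ℝ)*ep) * Dj ^ (γ + (n:ℝ)*ep))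
          * V ^ ep * eLpNorm f p (volume.restrict (Ann n j)) := by
        rw [← ENNReal.ofReal_mul (by positivity)]
        congr 2
        rw [Real.rpow_add hDj]
        ring

theorem stmt1 (n : ℕ) (hn : 1 ≤ n) (p q : ℝ≥0∞) (hp : 1 ≤ p) (hq : 1 ≤ q)
    (hpq : 1 ≤ 1/p + 1/q) (α β : ℝ)
    (hscal : α + β = -((n : ℝ) * (1 - 1/p).toReal) - ((n : ℝ) * (1 - 1/q).toReal))
    (hα : α < -((n : ℝ) * (1 - 1/p).toReal)) (C₀ : ℝ) (hC₀ : 0 < C₀) :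
    ∃ C : ℝ, 0 < C ∧ ∀ (f g : EuclideanSpace ℝ (Fin n) → ℂ),
      MemLp f p volume → MemLp g q volume →
      ∫⁻ z in {z : EuclideanSpace ℝ (Fin n) × EuclideanSpace ℝ (Fin n) | ‖z.2‖ ≤ C₀ * ‖z.1‖},
          ENNReal.ofReal (‖z.1‖ ^ α * ‖z.2‖ ^ β * ‖f z.1‖ * ‖g z.2‖)
        ≤ ENNReal.ofReal C * eLpNorm f p volume * eLpNorm g q volume := by
  classical
  set E := EuclideanSpace ℝ (Fin n) with hE
  haveI hnt : Nontrivial E := by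
    refine ⟨EuclideanSpace.single ⟨0, hn⟩ 1, 0, ?_⟩
    intro h
    have h2 : (EuclideanSpace.single ⟨0, hn⟩ (1:ℝ) : E) ⟨0, hn⟩ = (0 : E) ⟨0, hn⟩ := by rw [h]
    rw [EuclideanSpace.single_apply] at h2
    simp only [if_pos rfl] at h2
    exact one_ne_zero h2
  set ePp : ℝ := 1 - 1/p.toReal with hePp
  set ePq : ℝ := 1 - 1/q.toReal with hePq
  have hA : ((1:ℝ≥0∞) - 1/p).toReal = ePp := one_sub_inv_toReal p hp
  have hB : ((1:ℝ≥0∞) - 1/q).toReal = ePq := one_sub_inv_toReal q hq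
  rw [hA, hB] at hscal
  rw [hA] at hα
  set A : ℝ := (n:ℝ) * ePp with hAdef
  set B : ℝ := (n:ℝ) * ePq with hBdef
  set ε : ℝ := -(α + A) with hεdef
  have hε : 0 < ε := by simp only [hεdef]; linarith
  have hαA : α + A = -ε := by simp [hεdef]
  have hβB : β + B = ε := by simp only [hεdef]; linarith
  set c : ℤ := Int.log 2 C₀ + 1 with hcdef
  set V : ℝ≥0∞ := volume (Metric.ball (0:E) 1) with hVdef
  have hV0 : V ≠ 0 := (Metric.measure_ball_pos volume 0 one_pos).ne'
  have hVtop : V ≠ ⊤ := measure_ball_lt_top.ne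
  have heppos : 0 ≤ ePp := ep_nonneg p hp
  have heqpos : 0 ≤ ePq := ep_nonneg q hq
  set Kf : ℝ≥0∞ := ENNReal.ofReal ((2:ℝ) ^ |α| * (2:ℝ) ^ A) * V ^ ePp with hKf
  set Kg : ℝ≥0∞ := ENNReal.ofReal ((2:ℝ) ^ |β| * (2:ℝ) ^ B) * V ^ ePq with hKg
  have hKftop : Kf ≠ ⊤ :=
    ENNReal.mul_ne_top ENNReal.ofReal_ne_top (ENNReal.rpow_ne_top_of_nonneg heppos hVtop)
  have hKgtop : Kg ≠ ⊤ :=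
    ENNReal.mul_ne_top ENNReal.ofReal_ne_top (ENNReal.rpow_ne_top_of_nonneg heqpos hVtop)
  -- geometric factor
  set r : ℝ≥0∞ := ENNReal.ofReal ((2:ℝ) ^ (-ε)) with hrdef
  have hr1 : r < 1 := by
    rw [hrdef, ← ENNReal.ofReal_one]
    exact ENNReal.ofReal_lt_ofReal_iff_of_nonneg (Real.rpow_nonneg (by norm_num) _) |>.mpr
      (by
        have := Real.rpow_lt_one_of_one_lt_of_neg (one_lt_two) (neg_lt_zero.mpr hε)
        simpa using this)
  set Tgeo : ℝ≥0∞ := ENNReal.ofReal ((2:ℝ) ^ ((c:ℝ) * ε)) * (1 - r)⁻¹ with hTgeo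
  have hTgeotop : Tgeo ≠ ⊤ := by
    apply ENNReal.mul_ne_top ENNReal.ofReal_ne_top
    rw [ENNReal.inv_ne_top]
    exact (tsub_pos_iff_lt.mpr hr1).ne'
  -- the geometric sum bound
  have hgeosum : ∑' m : ℤ, (if -c ≤ m then ENNReal.ofReal ((2:ℝ) ^ (-(m:ℝ) * ε)) else 0)
      ≤ Tgeo := by
    set g0 : ℤ → ℝ≥0∞ := fun m => if -c ≤ m then ENNReal.ofReal ((2:ℝ) ^ (-(m:ℝ) * ε)) else 0
      with hg0
    have h1 : ∑' m : ℤ, g0 m = ∑' m : ℤ, g0 (m - c) := ((Equiv.subRight c).tsum_eq g0).symm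
    have h2 : ∑' m : ℤ, g0 (m - c) = ∑' i : ℕ, g0 ((i:ℤ) - c) := by
      refine (Function.Injective.tsum_eq (fun a b h => by exact_mod_cast h) ?_).symm
      intro m hm
      rcases le_or_gt 0 m with h0 | h0
      · exact ⟨m.toNat, by simp [Int.toNat_of_nonneg h0]⟩
      · exfalso
        apply hm
        rw [hg0]
        simp only [ite_eq_right_iff]
        intro hcon
        omega
    have h3 : ∀ i : ℕ, g0 ((i:ℤ) - c) = ENNReal.ofReal ((2:ℝ) ^ ((c:ℝ) * ε)) * r ^ i := by
      intro i
      rw [hg0]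
      simp only [show -c ≤ (i:ℤ) - c by omega, if_true]
      have hre : (2:ℝ) ^ (-((((i:ℤ) - c : ℤ)):ℝ) * ε)
          = (2:ℝ) ^ ((c:ℝ) * ε) * ((2:ℝ) ^ (-ε)) ^ (i:ℕ) := by
        rw [← Real.rpow_natCast ((2:ℝ) ^ (-ε)) i, ← Real.rpow_mul (by norm_num),
          ← Real.rpow_add two_pos]
        congr 1
        push_cast
        ring
      rw [hre, ENNReal.ofReal_mul (Real.rpow_nonneg (by norm_num) _),
        ENNReal.ofReal_pow (Real.rpow_nonneg (by norm_num) _), hrdef]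
    calc ∑' m : ℤ, g0 m = ∑' i : ℕ, g0 ((i:ℤ) - c) := by rw [h1, h2]
      _ = ENNReal.ofReal ((2:ℝ) ^ ((c:ℝ) * ε)) * ∑' i : ℕ, r ^ i := by
          simp only [h3]; rw [ENNReal.tsum_mul_left]
      _ = ENNReal.ofReal ((2:ℝ) ^ ((c:ℝ) * ε)) * (1 - r)⁻¹ := by rw [ENNReal.tsum_geometric]
      _ ≤ Tgeo := le_of_eq (by rw [hTgeo])
  -- the main estimate
  refine ⟨(Kf * Kg * Tgeo).toReal + 1, by positivity, ?_⟩
  intro f g hf hg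
  set F : ℤ → ℝ≥0∞ := fun j => eLpNorm f p (volume.restrict (Ann n j)) with hFdef
  set G : ℤ → ℝ≥0∞ := fun k => eLpNorm g q (volume.restrict (Ann n k)) with hGdef
  set Sf : ℝ≥0∞ := eLpNorm f p volume with hSf
  set Sg : ℝ≥0∞ := eLpNorm g q volume with hSg
  have hshift_sum : ∀ m : ℤ, ∑' j : ℤ, F j * G (j - m) ≤ Sf * Sg := by
    intro m
    exact holder_shift p q hp hq hpq F G Sf Sg
      (fun j => eLpNorm_mono_measure f Measure.restrict_le_self)
      (fun k => eLpNorm_mono_measure g Measure.restrict_le_self)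
      (fun h => sum_eLpNorm_rpow n p hp h f)
      (fun h => sum_eLpNorm_rpow n q hq h g) m
  set s : ℤ × ℤ → Set (E × E) := fun jk =>
    if jk.2 ≤ jk.1 + c then (Ann n jk.1) ×ˢ (Ann n jk.2) else (∅ : Set (E × E)) with hsdef
  set W : ℤ × ℤ → ℝ≥0∞ := fun jk =>
    if jk.2 ≤ jk.1 + c then
      ENNReal.ofReal (((2:ℝ)^jk.1) ^ (-ε) * ((2:ℝ)^jk.2) ^ ε) * (F jk.1 * G jk.2)
    else 0 with hWdef
  -- covering
  have hcov : {z : E × E | ‖z.2‖ ≤ C₀ * ‖z.1‖} ⊆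
      ({z : E × E | z.1 = 0} ∪ {z : E × E | z.2 = 0}) ∪ ⋃ jk, s jk := by
    intro z hz
    by_cases h1 : z.1 = 0
    · exact Or.inl (Or.inl h1)
    by_cases h2 : z.2 = 0
    · exact Or.inl (Or.inr h2)
    right
    have hj := mem_Ann_log n z.1 h1
    have hk := mem_Ann_log n z.2 h2
    set j := Int.log 2 ‖z.1‖ with hjd
    set k := Int.log 2 ‖z.2‖ with hkd
    have hkj : k ≤ j + c := by
      have hy : (2:ℝ)^k ≤ ‖z.2‖ := hk.1
      have hx : ‖z.1‖ < (2:ℝ)^(j+1) := hj.2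
      have hC : C₀ < (2:ℝ)^(Int.log 2 C₀ + 1) := by
        simpa using Int.lt_zpow_succ_log_self (b:=2) (by norm_num) C₀
      have hlt : (2:ℝ)^k < (2:ℝ)^(j + c + 1) := by
        calc (2:ℝ)^k ≤ ‖z.2‖ := hy
          _ ≤ C₀ * ‖z.1‖ := hz
          _ < (2:ℝ)^(Int.log 2 C₀ + 1) * (2:ℝ)^(j+1) :=
              mul_lt_mul'' hC hx hC₀.le (norm_nonneg _)
          _ = (2:ℝ)^(j + c + 1) := by
              rw [← zpow_add₀ (two_ne_zero : (2:ℝ) ≠ 0)]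
              congr 1
              rw [hcdef]
              ring
      by_contra hcon
      push_neg at hcon
      exact absurd (zpow_le_zpow_right₀ (one_le_two : (1:ℝ) ≤ 2) (by omega : j + c + 1 ≤ k))
        (not_le.2 hlt)
    refine Set.mem_iUnion.mpr ⟨(j, k), ?_⟩
    rw [hsdef]
    simp only [if_pos hkj]
    exact Set.mk_mem_prod hj hk
  -- null sets
  have hnull1 : volume ({z : E × E | z.1 = 0}) = 0 := by
    have he : {z : E × E | z.1 = 0} = ({0} : Set E) ×ˢ (Set.univ : Set E) := by
      ext z
      simp only [Set.mem_setOf_eq, Set.mem_prod, Set.mem_singleton_iff, Set.mem_univ, and_true]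
    rw [Measure.volume_eq_prod, he, Measure.prod_prod, measure_singleton, zero_mul]
  have hnull2 : volume ({z : E × E | z.2 = 0}) = 0 := by
    have he : {z : E × E | z.2 = 0} = (Set.univ : Set E) ×ˢ ({0} : Set E) := by
      ext z
      simp only [Set.mem_setOf_eq, Set.mem_prod, Set.mem_singleton_iff, Set.mem_univ, true_and]
    rw [Measure.volume_eq_prod, he, Measure.prod_prod, measure_singleton, mul_zero]
  -- measurability
  have hmf : ∀ j : ℤ, AEMeasurable (fun x : E => ENNReal.ofReal (‖x‖ ^ α * ‖f x‖))
      (volume.restrict (Ann n j)) := by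
    intro j
    apply AEMeasurable.ennreal_ofReal
    exact ((by fun_prop : Measurable fun x : E => ‖x‖ ^ α).aemeasurable.mul
      hf.1.restrict.norm.aemeasurable)
  have hmg : ∀ k : ℤ, AEMeasurable (fun y : E => ENNReal.ofReal (‖y‖ ^ β * ‖g y‖))
      (volume.restrict (Ann n k)) := by
    intro k
    apply AEMeasurable.ennreal_ofReal
    exact ((by fun_prop : Measurable fun y : E => ‖y‖ ^ β).aemeasurable.mul
      hg.1.restrict.norm.aemeasurable)
  -- per-term bound
  have hterm : ∀ jk : ℤ × ℤ,
      (∫⁻ z in s jk, ENNReal.ofReal (‖z.1‖ ^ α * ‖z.2‖ ^ β * ‖f z.1‖ * ‖g z.2‖))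
        ≤ Kf * Kg * W jk := by
    rintro ⟨j, k⟩
    by_cases hc1 : k ≤ j + c
    · rw [hsdef, hWdef]
      simp only [if_pos hc1]
      have hptwise : (fun z : E × E =>
            ENNReal.ofReal (‖z.1‖ ^ α * ‖z.2‖ ^ β * ‖f z.1‖ * ‖g z.2‖))
          = fun z : E × E => (fun x : E => ENNReal.ofReal (‖x‖ ^ α * ‖f x‖)) z.1
              * (fun y : E => ENNReal.ofReal (‖y‖ ^ β * ‖g y‖)) z.2 := by
        funext z
        rw [← ENNReal.ofReal_mul (by positivity)]
        congr 1
        ring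
      have hsplit : (∫⁻ z in (Ann n j) ×ˢ (Ann n k),
            ENNReal.ofReal (‖z.1‖ ^ α * ‖z.2‖ ^ β * ‖f z.1‖ * ‖g z.2‖))
          = (∫⁻ x in Ann n j, ENNReal.ofReal (‖x‖ ^ α * ‖f x‖))
            * (∫⁻ y in Ann n k, ENNReal.ofReal (‖y‖ ^ β * ‖g y‖)) := by
        rw [Measure.volume_eq_prod, ← Measure.prod_restrict, hptwise]
        exact lintegral_prod_mul (hmf j) (hmg k)
      rw [hsplit]
      have b1 := ann_bound n hn p hp α f hf.1 j
      have b2 := ann_bound n hn q hq β g hg.1 k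
      rw [show α + (n:ℝ) * (1 - 1/p.toReal) = -ε from hαA] at b1
      rw [show β + (n:ℝ) * (1 - 1/q.toReal) = ε from hβB] at b2
      calc (∫⁻ x in Ann n j, ENNReal.ofReal (‖x‖ ^ α * ‖f x‖))
            * (∫⁻ y in Ann n k, ENNReal.ofReal (‖y‖ ^ β * ‖g y‖))
          ≤ (ENNReal.ofReal ((2:ℝ) ^ |α| * (2:ℝ) ^ A * ((2:ℝ)^j) ^ (-ε)) * V ^ ePp * F j)
            * (ENNReal.ofReal ((2:ℝ) ^ |β| * (2:ℝ) ^ B * ((2:ℝ)^k) ^ ε) * V ^ ePq * G k) :=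
            mul_le_mul' b1 b2
        _ = Kf * Kg * (ENNReal.ofReal (((2:ℝ)^j) ^ (-ε) * ((2:ℝ)^k) ^ ε) * (F j * G k)) := by
            rw [hKf, hKg,
              ENNReal.ofReal_mul (by positivity : (0:ℝ) ≤ (2:ℝ) ^ |α| * (2:ℝ) ^ A),
              ENNReal.ofReal_mul (by positivity : (0:ℝ) ≤ (2:ℝ) ^ |β| * (2:ℝ) ^ B),
              ENNReal.ofReal_mul (by positivity : (0:ℝ) ≤ ((2:ℝ)^j) ^ (-ε))]
            ring
    · rw [hsdef, hWdef]
      simp only [if_neg hc1]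
      simp [Measure.restrict_empty]
  -- sum of W
  have hW : ∑' jk : ℤ × ℤ, W jk ≤ Tgeo * (Sf * Sg) := by
    have heq : ∀ m j : ℤ, ((2:ℝ)^j) ^ (-ε) * ((2:ℝ)^(j - m)) ^ ε = (2:ℝ) ^ (-(m:ℝ) * ε) := by
      intro m j
      rw [← Real.rpow_intCast 2 j, ← Real.rpow_intCast 2 (j - m),
        ← Real.rpow_mul (by norm_num), ← Real.rpow_mul (by norm_num),
        ← Real.rpow_add two_pos]
      congr 1
      push_cast
      ring
    set e : ℤ × ℤ ≃ ℤ × ℤ :=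
      { toFun := fun mj => (mj.2, mj.2 - mj.1)
        invFun := fun jk => (jk.1 - jk.2, jk.1)
        left_inv := by rintro ⟨m, j⟩; simp
        right_inv := by rintro ⟨j, k⟩; simp } with hedef
    rw [← e.tsum_eq W]
    have hprod : ∑' mj : ℤ × ℤ, W (e mj) = ∑' m : ℤ, ∑' j : ℤ, W (j, j - m) := by
      exact ENNReal.tsum_prod (f := fun m j => W (j, j - m))
    rw [hprod]
    have hinner : ∀ m : ℤ, ∑' j : ℤ, W (j, j - m)
        ≤ (if -c ≤ m then ENNReal.ofReal ((2:ℝ) ^ (-(m:ℝ) * ε)) else 0) * (Sf * Sg) := by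
      intro m
      by_cases hm : -c ≤ m
      · rw [if_pos hm]
        calc ∑' j : ℤ, W (j, j - m)
            = ∑' j : ℤ, ENNReal.ofReal ((2:ℝ) ^ (-(m:ℝ) * ε)) * (F j * G (j - m)) := by
              apply tsum_congr
              intro j
              rw [hWdef]
              simp only [if_pos (by omega : j - m ≤ j + c)]
              rw [heq m j]
          _ = ENNReal.ofReal ((2:ℝ) ^ (-(m:ℝ) * ε)) * ∑' j : ℤ, F j * G (j - m) :=
              ENNReal.tsum_mul_left
          _ ≤ ENNReal.ofReal ((2:ℝ) ^ (-(m:ℝ) * ε)) * (Sf * Sg) :=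
              mul_le_mul_right (hshift_sum m) _
      · rw [if_neg hm]
        have hz : ∀ j : ℤ, W (j, j - m) = 0 := by
          intro j
          rw [hWdef]
          simp only [if_neg (by omega : ¬ (j - m ≤ j + c))]
        simp [hz]
    calc ∑' m : ℤ, ∑' j : ℤ, W (j, j - m)
        ≤ ∑' m : ℤ, (if -c ≤ m then ENNReal.ofReal ((2:ℝ) ^ (-(m:ℝ) * ε)) else 0) * (Sf * Sg) :=
          ENNReal.tsum_le_tsum hinner
      _ = (∑' m : ℤ, (if -c ≤ m then ENNReal.ofReal ((2:ℝ) ^ (-(m:ℝ) * ε)) else 0)) * (Sf * Sg) :=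
          ENNReal.tsum_mul_right
      _ ≤ Tgeo * (Sf * Sg) := mul_le_mul_left hgeosum _
  -- final constant comparison
  have hCle : Kf * Kg * Tgeo ≤ ENNReal.ofReal ((Kf * Kg * Tgeo).toReal + 1) := by
    have hfin : Kf * Kg * Tgeo ≠ ⊤ :=
      ENNReal.mul_ne_top (ENNReal.mul_ne_top hKftop hKgtop) hTgeotop
    rw [ENNReal.ofReal_add ENNReal.toReal_nonneg zero_le_one, ENNReal.ofReal_one,
      ENNReal.ofReal_toReal hfin]
    exact le_self_add
  calc ∫⁻ z in {z : E × E | ‖z.2‖ ≤ C₀ * ‖z.1‖},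
        ENNReal.ofReal (‖z.1‖ ^ α * ‖z.2‖ ^ β * ‖f z.1‖ * ‖g z.2‖)
      ≤ ∫⁻ z in (({z : E × E | z.1 = 0} ∪ {z : E × E | z.2 = 0}) ∪ ⋃ jk, s jk),
          ENNReal.ofReal (‖z.1‖ ^ α * ‖z.2‖ ^ β * ‖f z.1‖ * ‖g z.2‖) :=
        lintegral_mono_set hcov
    _ ≤ (∫⁻ z in ({z : E × E | z.1 = 0} ∪ {z : E × E | z.2 = 0}),
          ENNReal.ofReal (‖z.1‖ ^ α * ‖z.2‖ ^ β * ‖f z.1‖ * ‖g z.2‖))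
        + ∫⁻ z in ⋃ jk, s jk,
            ENNReal.ofReal (‖z.1‖ ^ α * ‖z.2‖ ^ β * ‖f z.1‖ * ‖g z.2‖) :=
        lintegral_union_le _ _ _
    _ = ∫⁻ z in ⋃ jk, s jk,
          ENNReal.ofReal (‖z.1‖ ^ α * ‖z.2‖ ^ β * ‖f z.1‖ * ‖g z.2‖) := by
        rw [setLIntegral_measure_zero _ _ (measure_union_null hnull1 hnull2), zero_add]
    _ ≤ ∑' jk : ℤ × ℤ, ∫⁻ z in s jk,
          ENNReal.ofReal (‖z.1‖ ^ α * ‖z.2‖ ^ β * ‖f z.1‖ * ‖g z.2‖) :=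
        lintegral_iUnion_le _ _
    _ ≤ ∑' jk : ℤ × ℤ, Kf * Kg * W jk := ENNReal.tsum_le_tsum hterm
    _ = Kf * Kg * ∑' jk : ℤ × ℤ, W jk := ENNReal.tsum_mul_left
    _ ≤ Kf * Kg * (Tgeo * (Sf * Sg)) := mul_le_mul_right hW _
    _ = (Kf * Kg * Tgeo) * Sf * Sg := by ring
    _ ≤ ENNReal.ofReal ((Kf * Kg * Tgeo).toReal + 1) * Sf * Sg := by
        exact mul_le_mul_left (mul_le_mul_left hCle _) _
end
end

section
/- Let n ≥ 3 and let ε > 0 be sufficiently small (depending on n). Define a(x) := ⟨x⟩ - ε⟨x⟩^{1-ε} on ℝ^n, where ⟨x⟩ = (1+|x|²)^{1/2}. Then -ΔΔa(x) ≳_ε ⟨x⟩^{-(3+ε)} for all x ∈ ℝ^n. -/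
open MeasureTheory

noncomputable section

/-- The Laplacian of a function on `ℝⁿ`, as a sum of second directional derivatives
along the coordinate directions. -/
def lap {n : ℕ} (f : EuclideanSpace ℝ (Fin n) → ℝ) (x : EuclideanSpace ℝ (Fin n)) : ℝ :=
  ∑ i : Fin n, fderiv ℝ (fun y => fderiv ℝ f y (EuclideanSpace.single i 1)) x
    (EuclideanSpace.single i 1)

/-- The weight `a(x) = ⟨x⟩ - ε⟨x⟩^{1-ε}`. -/
def aWeight {n : ℕ} (ε : ℝ) (x : EuclideanSpace ℝ (Fin n)) : ℝ :=
  Real.sqrt (1 + ‖x‖ ^ 2) - ε * Real.sqrt (1 + ‖x‖ ^ 2) ^ (1 - ε)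

lemma rpow_shift {t : ℝ} (ht : 0 < t) {a b : ℝ} (h : a + 1 = b) :
    t * t ^ a = t ^ b := by
  rw [← h, Real.rpow_add_one ht.ne', mul_comm]

lemma rpow_congr (t : ℝ) {a b : ℝ} (h : a = b) : t ^ a = t ^ b := by rw [h]

lemma sum_sq' {n : ℕ} (x : EuclideanSpace ℝ (Fin n)) : ∑ i, x i ^ 2 = ‖x‖ ^ 2 := by
  rw [EuclideanSpace.norm_eq, Real.sq_sqrt (by positivity)]
  simp [sq_abs]

lemma hasFDerivAt_radial {n : ℕ} (h h' : ℝ → ℝ)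
    (H : ∀ t : ℝ, 1 ≤ t → HasDerivAt h (h' t) t) (y : EuclideanSpace ℝ (Fin n)) :
    HasFDerivAt (fun z : EuclideanSpace ℝ (Fin n) => h (1 + ‖z‖ ^ 2))
      ((h' (1 + ‖y‖ ^ 2)) • (2 • innerSL ℝ y)) y := by
  have h1 : HasFDerivAt (fun z : EuclideanSpace ℝ (Fin n) => 1 + ‖z‖ ^ 2)
      (2 • innerSL ℝ y) y := (hasStrictFDerivAt_norm_sq y).hasFDerivAt.const_add 1
  exact (H _ (le_add_of_nonneg_right (by positivity))).comp_hasFDerivAt y h1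

lemma lap_radial {n : ℕ} (h h' h'' : ℝ → ℝ)
    (H1 : ∀ t : ℝ, 1 ≤ t → HasDerivAt h (h' t) t)
    (H2 : ∀ t : ℝ, 1 ≤ t → HasDerivAt h' (h'' t) t)
    (x : EuclideanSpace ℝ (Fin n)) :
    lap (fun y => h (1 + ‖y‖ ^ 2)) x
      = 4 * (‖x‖ ^ 2) * h'' (1 + ‖x‖ ^ 2) + 2 * n * h' (1 + ‖x‖ ^ 2) := by
  have hfd : ∀ (y : EuclideanSpace ℝ (Fin n)) (i : Fin n),
      fderiv ℝ (fun z : EuclideanSpace ℝ (Fin n) => h (1 + ‖z‖ ^ 2)) y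
        (EuclideanSpace.single i 1) = h' (1 + ‖y‖ ^ 2) * (2 * y i) := by
    intro y i
    rw [(hasFDerivAt_radial h h' H1 y).fderiv]
    simp [real_inner_comm, EuclideanSpace.inner_single_right]
  have key : ∀ i : Fin n,
      fderiv ℝ (fun y => fderiv ℝ (fun z : EuclideanSpace ℝ (Fin n) => h (1 + ‖z‖ ^ 2)) y
        (EuclideanSpace.single i 1)) x (EuclideanSpace.single i 1)
      = 4 * h'' (1 + ‖x‖ ^ 2) * (x i) ^ 2 + 2 * h' (1 + ‖x‖ ^ 2) := by
    intro i
    have heq : (fun y => fderiv ℝ (fun z : EuclideanSpace ℝ (Fin n) => h (1 + ‖z‖ ^ 2)) y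
        (EuclideanSpace.single i 1))
        = fun y : EuclideanSpace ℝ (Fin n) => h' (1 + ‖y‖ ^ 2) * (2 * y i) :=
      funext fun y => hfd y i
    rw [heq]
    have hφ : HasFDerivAt (fun y : EuclideanSpace ℝ (Fin n) => h' (1 + ‖y‖ ^ 2))
        ((h'' (1 + ‖x‖ ^ 2)) • (2 • innerSL ℝ x)) x := hasFDerivAt_radial h' h'' H2 x
    have hψ : HasFDerivAt (fun y : EuclideanSpace ℝ (Fin n) => 2 * y i)
        ((2 : ℝ) • (EuclideanSpace.proj i : EuclideanSpace ℝ (Fin n) →L[ℝ] ℝ)) x :=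
      (EuclideanSpace.proj i : EuclideanSpace ℝ (Fin n) →L[ℝ] ℝ).hasFDerivAt.const_mul 2
    rw [(hφ.fun_mul hψ).fderiv]
    simp [real_inner_comm, EuclideanSpace.inner_single_right]
    ring
  unfold lap
  rw [Finset.sum_congr rfl fun i _ => key i, Finset.sum_add_distrib, Finset.sum_const,
    ← Finset.mul_sum, sum_sq']
  simp [Finset.card_univ]
  ring

/-! ### The explicit power functions -/

def H0 (ε : ℝ) (t : ℝ) : ℝ := t ^ ((1:ℝ)/2) + (-ε) * t ^ ((1-ε)/2)

def H1 (ε : ℝ) (t : ℝ) : ℝ :=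
  (1:ℝ)/2 * t ^ ((1:ℝ)/2 - 1) + (-ε) * ((1-ε)/2 * t ^ ((1-ε)/2 - 1))

def H2 (ε : ℝ) (t : ℝ) : ℝ :=
  (1:ℝ)/2 * (((1:ℝ)/2 - 1) * t ^ ((1:ℝ)/2 - 1 - 1))
  + (-ε) * ((1-ε)/2 * (((1-ε)/2 - 1) * t ^ ((1-ε)/2 - 1 - 1)))

lemma hasDerivAt_H0 (ε : ℝ) {t : ℝ} (ht : t ≠ 0) : HasDerivAt (H0 ε) (H1 ε t) t :=
  (Real.hasDerivAt_rpow_const (Or.inl ht)).add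
    ((Real.hasDerivAt_rpow_const (Or.inl ht)).const_mul (-ε))

lemma hasDerivAt_H1 (ε : ℝ) {t : ℝ} (ht : t ≠ 0) : HasDerivAt (H1 ε) (H2 ε t) t :=
  ((Real.hasDerivAt_rpow_const (Or.inl ht)).const_mul ((1:ℝ)/2)).add
    (((Real.hasDerivAt_rpow_const (Or.inl ht)).const_mul ((1-ε)/2)).const_mul (-ε))

def G0 (ε : ℝ) (n : ℕ) (t : ℝ) : ℝ :=
  ((n:ℝ)-1) * t ^ (-(1:ℝ)/2) + t ^ (-(3:ℝ)/2)
  + (-(ε*(1-ε)*((1-ε)+(n:ℝ)-2))) * t ^ ((1-ε)/2 - 1)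
  + (ε*(1-ε)*((1-ε)-2)) * t ^ ((1-ε)/2 - 2)

def G1 (ε : ℝ) (n : ℕ) (t : ℝ) : ℝ :=
  ((n:ℝ)-1) * (-(1:ℝ)/2 * t ^ (-(1:ℝ)/2 - 1)) + (-(3:ℝ)/2 * t ^ (-(3:ℝ)/2 - 1))
  + (-(ε*(1-ε)*((1-ε)+(n:ℝ)-2))) * (((1-ε)/2 - 1) * t ^ ((1-ε)/2 - 1 - 1))
  + (ε*(1-ε)*((1-ε)-2)) * (((1-ε)/2 - 2) * t ^ ((1-ε)/2 - 2 - 1))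

def G2 (ε : ℝ) (n : ℕ) (t : ℝ) : ℝ :=
  ((n:ℝ)-1) * (-(1:ℝ)/2 * ((-(1:ℝ)/2 - 1) * t ^ (-(1:ℝ)/2 - 1 - 1)))
  + (-(3:ℝ)/2 * ((-(3:ℝ)/2 - 1) * t ^ (-(3:ℝ)/2 - 1 - 1)))
  + (-(ε*(1-ε)*((1-ε)+(n:ℝ)-2))) * (((1-ε)/2 - 1) * (((1-ε)/2 - 1 - 1) * t ^ ((1-ε)/2 - 1 - 1 - 1)))
  + (ε*(1-ε)*((1-ε)-2)) * (((1-ε)/2 - 2) * (((1-ε)/2 - 2 - 1) * t ^ ((1-ε)/2 - 2 - 1 - 1)))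

lemma hasDerivAt_G0 (ε : ℝ) (n : ℕ) {t : ℝ} (ht : t ≠ 0) :
    HasDerivAt (G0 ε n) (G1 ε n t) t :=
  ((((Real.hasDerivAt_rpow_const (Or.inl ht)).const_mul ((n:ℝ)-1)).add
    (Real.hasDerivAt_rpow_const (Or.inl ht))).add
    ((Real.hasDerivAt_rpow_const (Or.inl ht)).const_mul
      (-(ε*(1-ε)*((1-ε)+(n:ℝ)-2))))).add
    ((Real.hasDerivAt_rpow_const (Or.inl ht)).const_mul (ε*(1-ε)*((1-ε)-2)))

lemma hasDerivAt_G1 (ε : ℝ) (n : ℕ) {t : ℝ} (ht : t ≠ 0) :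
    HasDerivAt (G1 ε n) (G2 ε n t) t :=
  (((((Real.hasDerivAt_rpow_const (Or.inl ht)).const_mul (-(1:ℝ)/2)).const_mul
      ((n:ℝ)-1)).add
    ((Real.hasDerivAt_rpow_const (Or.inl ht)).const_mul (-(3:ℝ)/2))).add
    ((((Real.hasDerivAt_rpow_const (Or.inl ht)).const_mul ((1-ε)/2 - 1)).const_mul
      (-(ε*(1-ε)*((1-ε)+(n:ℝ)-2)))))).add
    (((Real.hasDerivAt_rpow_const (Or.inl ht)).const_mul ((1-ε)/2 - 2)).const_mul
      (ε*(1-ε)*((1-ε)-2)))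

/-! ### First Laplacian -/

lemma key1 {n : ℕ} (ε : ℝ) {t : ℝ} (ht : 1 ≤ t) :
    4*(t-1)*H2 ε t + 2*(n:ℝ)*H1 ε t = G0 ε n t := by
  have ht0 : (0:ℝ) < t := by linarith
  unfold H1 H2 G0
  have E1 : t ^ ((1:ℝ)/2 - 1) = t ^ (-(1:ℝ)/2) := rpow_congr t (by norm_num)
  have E2 : t ^ ((1:ℝ)/2 - 1 - 1) = t ^ (-(3:ℝ)/2) := rpow_congr t (by norm_num)
  have E3 : t ^ ((1-ε)/2 - 1 - 1) = t ^ ((1-ε)/2 - 2) := rpow_congr t (by ring)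
  rw [E1, E2, E3]
  have S1 : t * t ^ (-(3:ℝ)/2) = t ^ (-(1:ℝ)/2) := rpow_shift ht0 (by norm_num)
  have S2 : t * t ^ ((1-ε)/2 - 2) = t ^ ((1-ε)/2 - 1) := rpow_shift ht0 (by ring)
  linear_combination (-(1:ℝ)) * S1 + (4*(-ε)*((1-ε)/2)*((1-ε)/2-1)) * S2

lemma lap_aWeight_eq {n : ℕ} (ε : ℝ) (x : EuclideanSpace ℝ (Fin n)) :
    lap (aWeight ε) x = G0 ε n (1 + ‖x‖ ^ 2) := by
  have hA : (aWeight ε : EuclideanSpace ℝ (Fin n) → ℝ)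
      = fun y => H0 ε (1 + ‖y‖ ^ 2) := by
    funext y
    have h2 : (0:ℝ) ≤ 1 + ‖y‖ ^ 2 := by positivity
    unfold aWeight H0
    rw [Real.sqrt_eq_rpow, ← Real.rpow_mul h2,
      rpow_congr (1 + ‖y‖ ^ 2) (show (1:ℝ)/2*(1-ε) = (1-ε)/2 by ring)]
    ring
  rw [hA, lap_radial (H0 ε) (H1 ε) (H2 ε)
    (fun t htt => hasDerivAt_H0 ε (by linarith : t ≠ 0))
    (fun t htt => hasDerivAt_H1 ε (by linarith : t ≠ 0)) x]
  have h1t : (1:ℝ) ≤ 1 + ‖x‖ ^ 2 := le_add_of_nonneg_right (by positivity)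
  linear_combination key1 (n := n) ε h1t

/-! ### Second Laplacian -/

def FF (ε : ℝ) (n : ℕ) (t : ℝ) : ℝ :=
  (-(((n:ℝ)-1)*((n:ℝ)-3))) * t ^ (-(3:ℝ)/2) + (-(6*(n:ℝ)-18)) * t ^ (-(5:ℝ)/2)
  + (-15) * t ^ (-(7:ℝ)/2)
  + (-(ε * ((1-ε)*((1-ε)+(n:ℝ)-2)*((1-ε)-2)*((1-ε)+(n:ℝ)-4)))) * t ^ ((1-ε)/2 - 2)
  + (-(ε * (-2*(1-ε)*((1-ε)-2)*((1-ε)-4)*((1-ε)+(n:ℝ)-4)))) * t ^ ((1-ε)/2 - 3)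
  + (-(ε * ((1-ε)*((1-ε)-2)*((1-ε)-4)*((1-ε)-6)))) * t ^ ((1-ε)/2 - 4)

lemma key2 {n : ℕ} (ε : ℝ) {t : ℝ} (ht : 1 ≤ t) :
    4*(t-1)*G2 ε n t + 2*(n:ℝ)*G1 ε n t = FF ε n t := by
  have ht0 : (0:ℝ) < t := by linarith
  unfold G1 G2 FF
  have E1 : t ^ (-(1:ℝ)/2 - 1) = t ^ (-(3:ℝ)/2) := rpow_congr t (by norm_num)
  have E2 : t ^ (-(1:ℝ)/2 - 1 - 1) = t ^ (-(5:ℝ)/2) := rpow_congr t (by norm_num)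
  have E3 : t ^ (-(3:ℝ)/2 - 1) = t ^ (-(5:ℝ)/2) := rpow_congr t (by norm_num)
  have E4 : t ^ (-(3:ℝ)/2 - 1 - 1) = t ^ (-(7:ℝ)/2) := rpow_congr t (by norm_num)
  have E5 : t ^ ((1-ε)/2 - 1 - 1) = t ^ ((1-ε)/2 - 2) := rpow_congr t (by ring)
  have E6 : t ^ ((1-ε)/2 - 1 - 1 - 1) = t ^ ((1-ε)/2 - 3) := rpow_congr t (by ring)
  have E7 : t ^ ((1-ε)/2 - 2 - 1) = t ^ ((1-ε)/2 - 3) := rpow_congr t (by ring)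
  have E8 : t ^ ((1-ε)/2 - 2 - 1 - 1) = t ^ ((1-ε)/2 - 4) := rpow_congr t (by ring)
  rw [E1, E2, E3, E4, E5, E6, E7, E8]
  have S1 : t * t ^ (-(5:ℝ)/2) = t ^ (-(3:ℝ)/2) := rpow_shift ht0 (by norm_num)
  have S2 : t * t ^ (-(7:ℝ)/2) = t ^ (-(5:ℝ)/2) := rpow_shift ht0 (by norm_num)
  have S3 : t * t ^ ((1-ε)/2 - 3) = t ^ ((1-ε)/2 - 2) := rpow_shift ht0 (by ring)
  have S4 : t * t ^ ((1-ε)/2 - 4) = t ^ ((1-ε)/2 - 3) := rpow_shift ht0 (by ring)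
  linear_combination (3*((n:ℝ)-1)) * S1 + (15:ℝ) * S2
    + (4*(-(ε*(1-ε)*((1-ε)+(n:ℝ)-2)))*((1-ε)/2-1)*((1-ε)/2-2)) * S3
    + (4*(ε*(1-ε)*((1-ε)-2))*((1-ε)/2-2)*((1-ε)/2-3)) * S4

lemma lap_lap_eq {n : ℕ} (ε : ℝ) (x : EuclideanSpace ℝ (Fin n)) :
    lap (lap (aWeight ε)) x = FF ε n (1 + ‖x‖ ^ 2) := by
  have h : (lap (aWeight ε) : EuclideanSpace ℝ (Fin n) → ℝ)
      = fun y => G0 ε n (1 + ‖y‖ ^ 2) := funext fun y => lap_aWeight_eq ε y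
  rw [h, lap_radial (G0 ε n) (G1 ε n) (G2 ε n)
    (fun t htt => hasDerivAt_G0 ε n (by linarith : t ≠ 0))
    (fun t htt => hasDerivAt_G1 ε n (by linarith : t ≠ 0)) x]
  have h1t : (1:ℝ) ≤ 1 + ‖x‖ ^ 2 := le_add_of_nonneg_right (by positivity)
  linear_combination key2 (n := n) ε h1t


lemma hK3 {ε : ℝ} (hε : 0 < ε) (hε4 : ε < 1/4) :
    0 < ((3:ℝ)-1)*((3:ℝ)-3) + ε*((1-ε)*((1-ε)+(3:ℝ)-2)*((1-ε)-2)*((1-ε)+(3:ℝ)-4)) := by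
  have h : 0 < ε*ε*(1-ε)*(2-ε)*(1+ε) := by
    have h1 : (0:ℝ) < 1 - ε := by linarith
    have h2 : (0:ℝ) < 2 - ε := by linarith
    have h3 : (0:ℝ) < 1 + ε := by linarith
    positivity
  nlinarith [h]

lemma hK4 {N ε : ℝ} (hN : 4 ≤ N) (hε : 0 < ε) (hε4 : ε < 1/4) :
    0 < (N-1)*(N-3) + ε*((1-ε)*((1-ε)+N-2)*((1-ε)-2)*((1-ε)+N-4)) := by
  have a1 : (0:ℝ) ≤ N-3-ε := by linarith
  have m1 : (N-1-ε)*(N-3-ε) ≤ (N-1)*(N-3) :=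
    mul_le_mul (by linarith) (by linarith) a1 (by linarith)
  have m2 : ε*((1-ε)*(1+ε)) ≤ 1/4 := by
    have i1 : (1-ε)*(1+ε) ≤ 1 := by nlinarith [sq_nonneg ε]
    have i2 : ε*((1-ε)*(1+ε)) ≤ ε*1 := mul_le_mul_of_nonneg_left i1 hε.le
    linarith
  have m0 : (0:ℝ) ≤ (N-1-ε)*(N-3-ε) := mul_nonneg (by linarith) a1
  have m3 : ε*((1-ε)*(1+ε)) * ((N-1-ε)*(N-3-ε)) ≤ (1/4)*((N-1)*(N-3)) :=
    mul_le_mul m2 m1 m0 (by norm_num)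
  nlinarith [m3, mul_pos (show (0:ℝ) < N-1 by linarith) (show (0:ℝ) < N-3 by linarith)]

lemma hB3 {ε : ℝ} (hε : 0 < ε) (hε4 : ε < 1/4) :
    0 ≤ 6*((3:ℝ)-3) + ε*(-2*(1-ε)*((1-ε)-2)*((1-ε)-4)*((1-ε)+(3:ℝ)-4)) := by
  have h : 0 ≤ 2*(ε*ε)*(1-ε)*(1+ε)*(3+ε) := by
    have h1 : (0:ℝ) ≤ 1 - ε := by linarith
    have h3 : (0:ℝ) ≤ 1 + ε := by linarith
    have h4 : (0:ℝ) ≤ 3 + ε := by linarith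
    positivity
  nlinarith [h]

lemma hB4 {N ε : ℝ} (hN : 4 ≤ N) (hε : 0 < ε) (hε4 : ε < 1/4) :
    0 ≤ 6*(N-3) + ε*(-2*(1-ε)*((1-ε)-2)*((1-ε)-4)*((1-ε)+N-4)) := by
  have a1 : (0:ℝ) ≤ N-3-ε := by linarith
  have m2 : ε*(2*(1-ε)*(1+ε)*(3+ε)) ≤ 2 := by
    have i1 : 2*(1-ε)*(1+ε)*(3+ε) ≤ 8 := by nlinarith [sq_nonneg ε]
    have i2 : ε*(2*(1-ε)*(1+ε)*(3+ε)) ≤ ε*8 := mul_le_mul_of_nonneg_left i1 hε.le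
    linarith
  have m3 : ε*(2*(1-ε)*(1+ε)*(3+ε)) * (N-3-ε) ≤ 2*(N-3) :=
    mul_le_mul m2 (by linarith) a1 (by norm_num)
  nlinarith [m3]

lemma hC' {ε : ℝ} (hε : 0 < ε) (hε4 : ε < 1/4) :
    0 ≤ 15 + ε*((1-ε)*((1-ε)-2)*((1-ε)-4)*((1-ε)-6)) := by
  have c1 : (1-ε)*(1+ε) ≤ 1 := by nlinarith
  have c2 : (3+ε)*(5+ε) ≤ 18 := by nlinarith
  have c3 : (0:ℝ) ≤ (3+ε)*(5+ε) := by positivity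
  have c4 : (1-ε)*(1+ε)*((3+ε)*(5+ε)) ≤ 18 := by nlinarith [mul_le_mul c1 c2 c3 (by norm_num : (0:ℝ) ≤ 1)]
  have c5 : ε * ((1-ε)*(1+ε)*((3+ε)*(5+ε))) ≤ ε * 18 :=
    mul_le_mul_of_nonneg_left c4 hε.le
  nlinarith [c5]

theorem stmt7 (n : ℕ) (hn : 3 ≤ n) :
    ∃ ε₀ : ℝ, 0 < ε₀ ∧ ∀ ε : ℝ, 0 < ε → ε < ε₀ →
      ∃ c : ℝ, 0 < c ∧ ∀ x : EuclideanSpace ℝ (Fin n),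
        c * Real.sqrt (1 + ‖x‖ ^ 2) ^ (-(3 + ε)) ≤ - lap (lap (aWeight ε)) x := by
  have hn3 : (3:ℝ) ≤ (n:ℝ) := by exact_mod_cast hn
  refine ⟨1/4, by norm_num, fun ε hε hε4 => ?_⟩
  have hcases : (n:ℝ) = 3 ∨ (4:ℝ) ≤ (n:ℝ) := by
    rcases eq_or_lt_of_le hn with h | h
    · left; exact_mod_cast h.symm
    · right; exact_mod_cast h
  have hK : 0 < ((n:ℝ)-1)*((n:ℝ)-3)
      + ε*((1-ε)*((1-ε)+(n:ℝ)-2)*((1-ε)-2)*((1-ε)+(n:ℝ)-4)) := by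
    rcases hcases with h | h
    · rw [h]; exact hK3 hε hε4
    · exact hK4 h hε hε4
  have hBc : 0 ≤ 6*((n:ℝ)-3)
      + ε*(-2*(1-ε)*((1-ε)-2)*((1-ε)-4)*((1-ε)+(n:ℝ)-4)) := by
    rcases hcases with h | h
    · rw [h]; exact hB3 hε hε4
    · exact hB4 h hε hε4
  have hCc : 0 ≤ 15 + ε*((1-ε)*((1-ε)-2)*((1-ε)-4)*((1-ε)-6)) := hC' hε hε4
  refine ⟨((n:ℝ)-1)*((n:ℝ)-3)
      + ε*((1-ε)*((1-ε)+(n:ℝ)-2)*((1-ε)-2)*((1-ε)+(n:ℝ)-4)), hK, fun x => ?_⟩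
  rw [lap_lap_eq]
  set t : ℝ := 1 + ‖x‖ ^ 2 with hts
  have h1t : (1:ℝ) ≤ t := le_add_of_nonneg_right (by positivity)
  have ht0 : (0:ℝ) < t := by linarith
  have hs : Real.sqrt t ^ (-(3 + ε)) = t ^ ((1-ε)/2 - 2) := by
    rw [Real.sqrt_eq_rpow, ← Real.rpow_mul ht0.le]
    exact rpow_congr t (by ring)
  rw [hs]
  unfold FF
  have hq : (0:ℝ) < t ^ ((1-ε)/2 - 3) := Real.rpow_pos_of_pos ht0 _
  have hr : (0:ℝ) < t ^ ((1-ε)/2 - 4) := Real.rpow_pos_of_pos ht0 _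
  have hu : t ^ ((1-ε)/2 - 2) ≤ t ^ (-(3:ℝ)/2) :=
    Real.rpow_le_rpow_of_exponent_le h1t (by linarith)
  have hv : t ^ ((1-ε)/2 - 3) ≤ t ^ (-(5:ℝ)/2) :=
    Real.rpow_le_rpow_of_exponent_le h1t (by linarith)
  have hw : t ^ ((1-ε)/2 - 4) ≤ t ^ (-(7:ℝ)/2) :=
    Real.rpow_le_rpow_of_exponent_le h1t (by linarith)
  have hP1 : (0:ℝ) ≤ ((n:ℝ)-1)*((n:ℝ)-3) :=
    mul_nonneg (by linarith) (by linarith)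
  have t1 : ((n:ℝ)-1)*((n:ℝ)-3) * t ^ ((1-ε)/2 - 2)
      ≤ ((n:ℝ)-1)*((n:ℝ)-3) * t ^ (-(3:ℝ)/2) := mul_le_mul_of_nonneg_left hu hP1
  have t2 : (6*(n:ℝ)-18) * t ^ ((1-ε)/2 - 3)
      ≤ (6*(n:ℝ)-18) * t ^ (-(5:ℝ)/2) := mul_le_mul_of_nonneg_left hv (by linarith)
  have t3 : (15:ℝ) * t ^ ((1-ε)/2 - 4)
      ≤ 15 * t ^ (-(7:ℝ)/2) := mul_le_mul_of_nonneg_left hw (by norm_num)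
  have t4 : 0 ≤ (6*((n:ℝ)-3)
      + ε*(-2*(1-ε)*((1-ε)-2)*((1-ε)-4)*((1-ε)+(n:ℝ)-4))) * t ^ ((1-ε)/2 - 3) :=
    mul_nonneg hBc hq.le
  have t5 : 0 ≤ (15 + ε*((1-ε)*((1-ε)-2)*((1-ε)-4)*((1-ε)-6))) * t ^ ((1-ε)/2 - 4) :=
    mul_nonneg hCc hr.le
  nlinarith [t1, t2, t3, t4, t5]
end
end

section
/- Let n ≥ 3, let ε > 0 be sufficiently small depending on n, and let a(x) := ⟨x⟩ - ε⟨x⟩^{1-ε}. Then the Hessian of a is positive definite with the quantitative lower bound: for every x ∈ ℝ^n and every real vector v ∈ ℝ^n, one has ∂_j∂_k a(x) v_j v_k ≳ |v|² ⟨x⟩^{-(1+ε)}. -/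
open MeasureTheory

noncomputable section

def gP (p t : ℝ) : ℝ := (1+t) ^ p

lemma gP_hasDerivAt (p t : ℝ) (ht : 0 < 1+t) :
    HasDerivAt (gP p) (p * (1+t)^(p-1)) t := by
  have h := (Real.hasDerivAt_rpow_const (x := 1+t) (p := p)
      (Or.inl (ne_of_gt ht))).comp t ((hasDerivAt_id t).const_add 1)
  rw [mul_one] at h
  exact h

def gA (ε t : ℝ) : ℝ := (1+t) ^ ((1:ℝ)/2) - ε * (1+t) ^ ((1-ε)/2)
def gB (ε t : ℝ) : ℝ := (1:ℝ)/2 * (1+t) ^ ((1:ℝ)/2-1) - ε * ((1-ε)/2 * (1+t) ^ ((1-ε)/2-1))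
def gC (ε t : ℝ) : ℝ := (1:ℝ)/2 * (((1:ℝ)/2-1) * (1+t) ^ ((1:ℝ)/2-1-1))
    - ε * ((1-ε)/2 * (((1-ε)/2-1) * (1+t) ^ ((1-ε)/2-1-1)))

lemma gA_hasDerivAt (ε t : ℝ) (ht : 0 < 1+t) : HasDerivAt (gA ε) (gB ε t) t := by
  unfold gA gB
  have h1 := gP_hasDerivAt ((1:ℝ)/2) t ht
  have h2 := (gP_hasDerivAt ((1-ε)/2) t ht).const_mul ε
  exact h1.sub h2

lemma gB_hasDerivAt (ε t : ℝ) (ht : 0 < 1+t) : HasDerivAt (gB ε) (gC ε t) t := by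
  unfold gB gC
  have h1 := (gP_hasDerivAt ((1:ℝ)/2-1) t ht).const_mul ((1:ℝ)/2)
  have h2 := ((gP_hasDerivAt ((1-ε)/2-1) t ht).const_mul ((1-ε)/2)).const_mul ε
  exact h1.sub h2

lemma aWeight_eq {n : ℕ} (ε : ℝ) :
    aWeight (n := n) ε = fun y => gA ε (‖y‖^2) := by
  funext y
  have hb : (0:ℝ) ≤ 1 + ‖y‖^2 := by positivity
  simp only [aWeight, gA, Real.sqrt_eq_rpow, ← Real.rpow_mul hb]
  norm_num
  left; ring_nf

lemma aW_hasFDerivAt {n : ℕ} (ε : ℝ) (y : EuclideanSpace ℝ (Fin n)) :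
    HasFDerivAt (aWeight ε)
      ((gB ε (‖y‖^2)) • (2 • (innerSL ℝ y).comp
        (ContinuousLinearMap.id ℝ (EuclideanSpace ℝ (Fin n))))) y := by
  have h1 := (hasFDerivAt_id y).norm_sq
  have h2 := HasDerivAt.comp_hasFDerivAt y
    (gA_hasDerivAt ε (‖y‖^2) (by positivity)) h1
  rw [aWeight_eq ε]
  exact h2

lemma gBcomp_hasFDerivAt {n : ℕ} (ε : ℝ) (x : EuclideanSpace ℝ (Fin n)) :
    HasFDerivAt (fun y : EuclideanSpace ℝ (Fin n) => gB ε (‖y‖^2))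
      ((gC ε (‖x‖^2)) • (2 • (innerSL ℝ x).comp
        (ContinuousLinearMap.id ℝ (EuclideanSpace ℝ (Fin n))))) x := by
  have h := HasDerivAt.comp_hasFDerivAt x (gB_hasDerivAt ε (‖x‖^2) (by positivity))
    (hasFDerivAt_id x).norm_sq
  exact h

lemma hessian_val {n : ℕ} (ε : ℝ) (x v : EuclideanSpace ℝ (Fin n)) :
    fderiv ℝ (fun y => fderiv ℝ (aWeight ε) y v) x v
      = gB ε (‖x‖^2) * (2 * ‖v‖^2)
        + 2 * (inner ℝ x v : ℝ) * (gC ε (‖x‖^2) * (2 * (inner ℝ x v : ℝ))) := by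
  have hF : (fun y : EuclideanSpace ℝ (Fin n) => fderiv ℝ (aWeight ε) y v)
      = fun y => gB ε (‖y‖^2) * (2 * (inner ℝ y v : ℝ)) := by
    funext y
    rw [(aW_hasFDerivAt ε y).fderiv]
    simp only [ContinuousLinearMap.smul_apply, ContinuousLinearMap.comp_apply,
      ContinuousLinearMap.coe_id', id_eq, innerSL_apply_apply, smul_eq_mul, nsmul_eq_mul,
      Nat.cast_ofNat]
  have hw : HasFDerivAt (fun y : EuclideanSpace ℝ (Fin n) => 2 * (inner ℝ y v : ℝ))
      ((2:ℝ) • (innerSL ℝ v)) x := by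
    have : (fun y : EuclideanSpace ℝ (Fin n) => 2 * (inner ℝ y v : ℝ))
        = fun y => ((2:ℝ) • (innerSL ℝ v)) y := by
      funext y
      simp only [ContinuousLinearMap.smul_apply, innerSL_apply_apply, smul_eq_mul]
      rw [real_inner_comm]
    rw [this]
    exact ((2:ℝ) • (innerSL ℝ v)).hasFDerivAt
  have hmul := (gBcomp_hasFDerivAt ε x).mul hw
  rw [hF, show (fun y : EuclideanSpace ℝ (Fin n) => gB ε (‖y‖^2) * (2 * (inner ℝ y v : ℝ))) = (fun y => gB ε (‖y‖^2)) * (fun y => 2 * (inner ℝ y v : ℝ)) from rfl, hmul.fderiv]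
  simp only [ContinuousLinearMap.add_apply, ContinuousLinearMap.smul_apply,
    ContinuousLinearMap.comp_apply, ContinuousLinearMap.coe_id', id_eq, innerSL_apply_apply,
    smul_eq_mul, nsmul_eq_mul, Nat.cast_ofNat]
  rw [real_inner_self_eq_norm_sq]

lemma key_ineq (ε : ℝ) (hε : 0 < ε) (hε1 : ε < 1) (q V p : ℝ) (hq : 0 ≤ q) (hV : 0 ≤ V)
    (hp : p^2 ≤ q * V) :
    ε^2*(1-ε) * V * Real.sqrt (1+q) ^ (-(1+ε))
      ≤ gB ε q * (2*V) + 2*p*(gC ε q * (2*p)) := by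
  set s := Real.sqrt (1+q) with hsdef
  have hb0 : (0:ℝ) < 1+q := by linarith
  have hs2 : s^2 = 1+q := Real.sq_sqrt hb0.le
  have hs0 : 0 < s := Real.sqrt_pos.2 hb0
  have hs1 : 1 ≤ s := by nlinarith
  have hpow : ∀ r : ℝ, (1+q) ^ (r:ℝ) = s ^ (2*r) := by
    intro r
    rw [← hs2, ← Real.rpow_natCast s 2, ← Real.rpow_mul hs0.le]
    norm_num
  have e3' : s ^ (-(3:ℝ)) = (s⁻¹)^3 := by
    rw [Real.rpow_neg hs0.le, show (3:ℝ) = ((3:ℕ):ℝ) by norm_num, Real.rpow_natCast, ← inv_pow]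
  have e1 : (1+q) ^ ((1:ℝ)/2-1) = s⁻¹ := by
    rw [hpow, show 2*((1:ℝ)/2-1) = -1 by ring, Real.rpow_neg_one]
  have e2 : (1+q) ^ ((1-ε)/2-1) = s⁻¹ * s ^ (-ε) := by
    rw [hpow, show 2*((1-ε)/2-1) = (-1) + (-ε) by ring, Real.rpow_add hs0, Real.rpow_neg_one]
  have e3 : (1+q) ^ ((1:ℝ)/2-1-1) = (s⁻¹)^3 := by
    rw [hpow, show 2*((1:ℝ)/2-1-1) = -(3:ℝ) by ring, e3']
  have e4 : (1+q) ^ ((1-ε)/2-1-1) = (s⁻¹)^3 * s ^ (-ε) := by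
    rw [hpow, show 2*((1-ε)/2-1-1) = (-(3:ℝ)) + (-ε) by ring, Real.rpow_add hs0, e3']
  have e5 : s ^ (-(1+ε)) = s⁻¹ * s ^ (-ε) := by
    rw [show -(1+ε) = (-1) + (-ε) by ring, Real.rpow_add hs0, Real.rpow_neg_one]
  unfold gB gC
  rw [e1, e2, e3, e4, e5]
  set w := s⁻¹ with hwdef
  set u := s ^ (-ε : ℝ) with hudef
  have hw0 : 0 ≤ w := inv_nonneg.2 hs0.le
  have hu0 : 0 < u := Real.rpow_pos_of_pos hs0 _
  have hu1 : u ≤ 1 := Real.rpow_le_one_of_one_le_of_nonpos hs1 (by linarith)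
  have hrel : q * w^3 = w - w^3 := by
    have hq' : q = s^2 - 1 := by linarith
    rw [hq', hwdef]
    field_simp
  have h1 : ε*(1-ε^2)*u ≤ 1 := by nlinarith [mul_pos hε hu0]
  have hA : 0 ≤ w^3 - ε*(1-ε^2)*(w^3*u) := by nlinarith [pow_nonneg hw0 3]
  have step1 : (q*V)*(-(w^3) + ε*(1-ε^2)*(w^3*u)) ≤ p^2*(-(w^3) + ε*(1-ε^2)*(w^3*u)) :=
    mul_le_mul_of_nonpos_right hp (by linarith)
  have key : V*(w - ε*(1-ε)*(w*u)) + (q*V)*(-(w^3) + ε*(1-ε^2)*(w^3*u))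
      = ε^2*(1-ε)*V*(w*u) + V*(w^3 - ε*(1-ε^2)*(w^3*u)) := by
    linear_combination (V*(ε*(1-ε^2)*u - 1)) * hrel
  nlinarith [mul_nonneg hV hA, step1, key]

theorem stmt8 (n : ℕ) (hn : 3 ≤ n) :
    ∃ ε₀ : ℝ, 0 < ε₀ ∧ ∀ ε : ℝ, 0 < ε → ε < ε₀ →
      ∃ c : ℝ, 0 < c ∧ ∀ x v : EuclideanSpace ℝ (Fin n),
        c * ‖v‖ ^ 2 * Real.sqrt (1 + ‖x‖ ^ 2) ^ (-(1 + ε))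
          ≤ fderiv ℝ (fun y => fderiv ℝ (aWeight ε) y v) x v := by
  refine ⟨1, one_pos, fun ε hε hε1 => ⟨ε^2*(1-ε), mul_pos (pow_pos hε 2) (by linarith), fun x v => ?_⟩⟩
  rw [hessian_val]
  have hp : (inner ℝ x v : ℝ)^2 ≤ ‖x‖^2 * ‖v‖^2 := by
    have h := abs_real_inner_le_norm x v
    nlinarith [sq_abs (inner ℝ x v : ℝ), norm_nonneg x, norm_nonneg v, abs_nonneg (inner ℝ x v : ℝ)]
  exact key_ineq ε hε (by linarith) (‖x‖^2) (‖v‖^2) (inner ℝ x v)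
    (by positivity) (by positivity) hp
end
end

section
/- Let n ≥ 3, let ε > 0 be sufficiently small depending on n, and let a(x) := ⟨x⟩ - ε⟨x⟩^{1-ε}. Then Δa(x) ≳_ε ⟨x⟩^{-(1+ε)} for all x ∈ ℝ^n, where Δa(x) = n/⟨x⟩ - |x|²/⟨x⟩³ - ε(1-ε)n/⟨x⟩^{1+ε} + ε(1-ε)(1+ε)|x|²/⟨x⟩^{3+ε}. -/
open MeasureTheory

noncomputable section

theorem stmt9 (n : ℕ) (hn : 3 ≤ n) :
    ∃ ε₀ : ℝ, 0 < ε₀ ∧ ∀ ε : ℝ, 0 < ε → ε < ε₀ →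
      ∃ c : ℝ, 0 < c ∧ ∀ x : EuclideanSpace ℝ (Fin n),
        c * Real.sqrt (1 + ‖x‖ ^ 2) ^ (-(1 + ε))
          ≤ (n : ℝ) / Real.sqrt (1 + ‖x‖ ^ 2)
            - ‖x‖ ^ 2 / Real.sqrt (1 + ‖x‖ ^ 2) ^ (3 : ℝ)
            - ε * (1 - ε) * (n : ℝ) / Real.sqrt (1 + ‖x‖ ^ 2) ^ (1 + ε)
            + ε * (1 - ε) * (1 + ε) * ‖x‖ ^ 2 / Real.sqrt (1 + ‖x‖ ^ 2) ^ (3 + ε) := by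
  have hn3 : (3 : ℝ) ≤ (n : ℝ) := by exact_mod_cast hn
  refine ⟨1 / (2 * n), by positivity, fun ε hε hε' => ⟨1 / 2, by norm_num, fun x => ?_⟩⟩
  have hεn : ε * n < 1 / 2 := by
    have hnpos : (0 : ℝ) < n := by linarith
    calc ε * n < (1 / (2 * n)) * n := by exact mul_lt_mul_of_pos_right hε' hnpos
    _ = 1 / 2 := by field_simp
  have hε1 : ε < 1 := by nlinarith
  set t := ‖x‖ ^ 2 with ht
  have htnn : 0 ≤ t := by positivity
  set s := Real.sqrt (1 + t) with hs
  have hs2 : s ^ 2 = 1 + t := Real.sq_sqrt (by linarith)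
  have hsnn : 0 ≤ s := Real.sqrt_nonneg _
  have hs1 : 1 ≤ s := by nlinarith
  have hsp : (0 : ℝ) < s := by linarith
  -- rpow facts
  have hA : s ≤ s ^ (1 + ε : ℝ) := by
    nth_rewrite 1 [← Real.rpow_one s]
    exact Real.rpow_le_rpow_of_exponent_le hs1 (by linarith)
  have hApos : (0 : ℝ) < s ^ (1 + ε : ℝ) := Real.rpow_pos_of_pos hsp _
  have h3 : s ^ (3 : ℝ) = s ^ 3 := by
    rw [show (3:ℝ) = ((3:ℕ):ℝ) by norm_num, Real.rpow_natCast]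
  have h3pos : (0:ℝ) < s ^ (3:ℝ) := Real.rpow_pos_of_pos hsp _
  have h3εpos : (0:ℝ) < s ^ (3 + ε : ℝ) := Real.rpow_pos_of_pos hsp _
  have hneg : s ^ (-(1 + ε) : ℝ) = (s ^ (1 + ε : ℝ))⁻¹ := Real.rpow_neg (le_of_lt hsp) _
  -- LHS ≤ (1/2)/s
  have hLHS : (1/2 : ℝ) * s ^ (-(1 + ε) : ℝ) ≤ (1/2) / s := by
    rw [hneg]
    have h : (s ^ (1 + ε : ℝ))⁻¹ ≤ s⁻¹ := inv_anti₀ hsp hA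
    calc (1/2 : ℝ) * (s ^ (1 + ε : ℝ))⁻¹ ≤ (1/2) * s⁻¹ := by linarith
      _ = (1/2) / s := (div_eq_mul_inv _ _).symm
  -- term bounds
  have ht2 : t / s ^ (3:ℝ) ≤ 1 / s := by
    rw [h3, div_le_div_iff₀ (by positivity) hsp]
    nlinarith
  have ht3 : ε * (1 - ε) * n / s ^ (1 + ε : ℝ) ≤ ε * n / s := by
    apply div_le_div₀ (by positivity) _ hsp hA
    nlinarith [mul_nonneg (mul_nonneg hε.le hε.le) (by linarith : (0:ℝ) ≤ (n:ℝ))]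
  have ht4 : 0 ≤ ε * (1 - ε) * (1 + ε) * t / s ^ (3 + ε : ℝ) := by
    apply div_nonneg _ h3εpos.le
    have := mul_nonneg (mul_nonneg (mul_nonneg hε.le (by linarith : (0:ℝ) ≤ 1 - ε))
      (by linarith : (0:ℝ) ≤ 1 + ε)) htnn
    linarith
  have hmain : (1/2 : ℝ) / s ≤ (n:ℝ)/s - t/s^(3:ℝ) - ε*(1-ε)*n/s^(1+ε:ℝ)
      + ε*(1-ε)*(1+ε)*t/s^(3+ε:ℝ) := by
    have h1 : (1/2 : ℝ)/s + 1/s + ε*n/s ≤ (n:ℝ)/s := by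
      rw [← add_div, ← add_div, div_le_div_iff₀ hsp hsp]
      nlinarith
    linarith
  linarith
end
end
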